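/- Under Assumption 1, there exists c > 0 such that for every transition kernel q one has max_{s,s'∈S} (V^π_q(s) − V^π_q(s')) ≥ c; in particular, for every kernel q the value function V^π_q is not constant on S. -/

import Mathlib

open Finset

noncomputable section

/-- `p` is a transition kernel: `p(·|s,a)` is a probability vector on `S`. -/
def IsKernel {S A : Type*} [Fintype S] (p : S → A → S → ℝ) : Prop :=
  (∀ s a s', 0 ≤ p s a s') ∧ ∀ s a, ∑ s' : S, p s a s' = 1

/-- `π` is a policy: `π(·|s)` is a probability vector on `A`. -/
def IsPolicy {S A : Type*} [Fintype A] (π : S → A → ℝ) : Prop :=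
  (∀ s a, 0 ≤ π s a) ∧ ∀ s, ∑ a : A, π s a = 1

/-- The row-stochastic matrix `P_{p,π}(s,s') = Σ_a π(a|s) p(s'|s,a)`. -/
def Pmat {S A : Type*} [Fintype A] (π : S → A → ℝ) (p : S → A → S → ℝ) :
    Matrix S S ℝ :=
  fun s s' => ∑ a : A, π s a * p s a s'

/-- `r^π(s) = Σ_a π(a|s) r(s,a)`. -/
def rpi {S A : Type*} [Fintype A] (π : S → A → ℝ) (r : S → A → ℝ) (s : S) : ℝ :=
  ∑ a : A, π s a * r s a

/-- The value function `V^π_p(s) = Σ_t γ^t ((P_{p,π})^t r^π)(s)`. -/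
def Vval {S A : Type*} [Fintype S] [DecidableEq S] [Fintype A]
    (γ : ℝ) (π : S → A → ℝ) (r : S → A → ℝ) (p : S → A → S → ℝ) (s : S) : ℝ :=
  ∑' t : ℕ, γ ^ t * ((Pmat π p ^ t).mulVec (fun s' => rpi π r s')) s

/-- The Q-function `Q^π_p(s,a) = r(s,a) + γ Σ_{s'} p(s'|s,a) V^π_p(s')`. -/
def Qval {S A : Type*} [Fintype S] [DecidableEq S] [Fintype A]
    (γ : ℝ) (π : S → A → ℝ) (r : S → A → ℝ) (p : S → A → S → ℝ) (s : S) (a : A) : ℝ :=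
  r s a + γ * ∑ s' : S, p s a s' * Vval γ π r p s'

/-- The matrix `M_{p,π}((s,a),(s',a')) = p(s'|s,a) π(a'|s')` on `S × A`. -/
def Mmat {S A : Type*} (π : S → A → ℝ) (p : S → A → S → ℝ) :
    Matrix (S × A) (S × A) ℝ :=
  fun sa s'a' => p sa.1 sa.2 s'a'.1 * π s'a'.1 s'a'.2

/-- The discounted visitation distribution
`d^π_{p,s,a}(s',a') = (1−γ) Σ_t γ^t ((M_{p,π})^t)_{(s,a),(s',a')}`. -/
def dvis {S A : Type*} [Fintype S] [DecidableEq S] [Fintype A] [DecidableEq A]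
    (γ : ℝ) (π : S → A → ℝ) (p : S → A → S → ℝ) (x y : S × A) : ℝ :=
  (1 - γ) * ∑' t : ℕ, γ ^ t * (Mmat π p ^ t) x y

/-- `d^π_{p,ρ}(s,a) = Σ_{(s₀,a₀)} ρ_{s₀} π(a₀|s₀) d^π_{p,s₀,a₀}(s,a)`. -/
def drho {S A : Type*} [Fintype S] [DecidableEq S] [Fintype A] [DecidableEq A]
    (γ : ℝ) (π : S → A → ℝ) (p : S → A → S → ℝ) (ρ : S → ℝ) (y : S × A) : ℝ :=
  ∑ x : S × A, ρ x.1 * π x.1 x.2 * dvis γ π p x y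

/-- `KL_{sa}(p,q) = Σ_{s'} p(s'|s,a) log(p(s'|s,a)/q(s'|s,a))`
(with the convention `0 log 0 = 0`, automatic since `Real.log 0 = 0`). -/
def KLsa {S A : Type*} [Fintype S] (p q : S → A → S → ℝ) (s : S) (a : A) : ℝ :=
  ∑ s' : S, p s a s' * Real.log (p s a s' / q s a s')

end

-- stochastic powers
lemma stoch_pow {S : Type*} [Fintype S] [DecidableEq S]
    (P : Matrix S S ℝ) (h0 : ∀ s s', 0 ≤ P s s') (h1 : ∀ s, ∑ s', P s s' = 1) (t : ℕ) :
    (∀ s s', 0 ≤ (P ^ t) s s') ∧ ∀ s, ∑ s', (P ^ t) s s' = 1 := by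
  induction t with
  | zero =>
    refine ⟨fun s s' => ?_, fun s => ?_⟩
    · by_cases h : s = s' <;> simp [Matrix.one_apply, h]
    · simp [Matrix.one_apply]
  | succ n ih =>
    refine ⟨fun s s' => ?_, fun s => ?_⟩
    · rw [pow_succ', Matrix.mul_apply]
      exact Finset.sum_nonneg fun k _ => mul_nonneg (h0 _ _) (ih.1 _ _)
    · rw [pow_succ']
      simp only [Matrix.mul_apply]
      rw [Finset.sum_comm]
      calc ∑ k, ∑ s', P s k * (P ^ n) k s' = ∑ k, P s k * ∑ s', (P ^ n) k s' := by
            simp [Finset.mul_sum]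
        _ = 1 := by simp [ih.2, h1]

lemma bellman_aux {S : Type*} [Fintype S] [DecidableEq S] [Nonempty S]
    (γ : ℝ) (hγ : γ ∈ Set.Ioo (0:ℝ) 1)
    (P : Matrix S S ℝ) (h0 : ∀ s s', 0 ≤ P s s') (h1 : ∀ s, ∑ s', P s s' = 1)
    (rp : S → ℝ) :
    (∀ s, Summable (fun t : ℕ => γ ^ t * ((P ^ t).mulVec rp) s)) ∧
    ∀ s, (∑' t : ℕ, γ ^ t * ((P ^ t).mulVec rp) s) =
      rp s + γ * ∑ s', P s s' * (∑' t : ℕ, γ ^ t * ((P ^ t).mulVec rp) s') := by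
  set M : ℝ := ∑ s', |rp s'| with hM
  have hbound : ∀ (t : ℕ) (s : S), ‖γ ^ t * ((P ^ t).mulVec rp) s‖ ≤ M * γ ^ t := by
    intro t s
    have hγt : (0:ℝ) ≤ γ ^ t := pow_nonneg hγ.1.le t
    have h2 : |((P ^ t).mulVec rp) s| ≤ M := by
      rw [Matrix.mulVec, dotProduct]
      calc |∑ s', (P ^ t) s s' * rp s'| ≤ ∑ s', |(P ^ t) s s' * rp s'| :=
            Finset.abs_sum_le_sum_abs _ _
        _ ≤ ∑ s', |rp s'| := by
            apply Finset.sum_le_sum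
            intro s' _
            rw [abs_mul, abs_of_nonneg ((stoch_pow P h0 h1 t).1 s s')]
            have hle1 : (P ^ t) s s' ≤ 1 := by
              have := (stoch_pow P h0 h1 t).2 s
              calc (P ^ t) s s' ≤ ∑ k, (P ^ t) s k :=
                    Finset.single_le_sum (fun k _ => (stoch_pow P h0 h1 t).1 s k)
                      (Finset.mem_univ s')
                _ = 1 := this
            nlinarith [abs_nonneg (rp s'), (stoch_pow P h0 h1 t).1 s s']
    rw [Real.norm_eq_abs, abs_mul, abs_pow, abs_of_nonneg hγ.1.le]
    nlinarith [abs_nonneg (((P ^ t).mulVec rp) s)]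
  have hsum : ∀ s, Summable (fun t : ℕ => γ ^ t * ((P ^ t).mulVec rp) s) := by
    intro s
    exact Summable.of_norm_bounded ((summable_geometric_of_lt_one hγ.1.le hγ.2).mul_left M)
      (fun t => hbound t s)
  refine ⟨hsum, fun s => ?_⟩
  rw [Summable.tsum_eq_zero_add (hsum s)]
  congr 1
  · simp [Matrix.one_mulVec]
  · have hterm : ∀ t : ℕ, γ ^ (t+1) * ((P ^ (t+1)).mulVec rp) s
        = ∑ s', γ * (P s s' * (γ ^ t * ((P ^ t).mulVec rp) s')) := by
      intro t
      rw [pow_succ' P t, ← Matrix.mulVec_mulVec, Matrix.mulVec, dotProduct]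
      rw [Finset.mul_sum]
      apply Finset.sum_congr rfl
      intro s' _
      ring
    calc (∑' t : ℕ, γ ^ (t+1) * ((P ^ (t+1)).mulVec rp) s)
        = ∑' t : ℕ, ∑ s', γ * (P s s' * (γ ^ t * ((P ^ t).mulVec rp) s')) := by
          exact tsum_congr hterm
      _ = ∑ s', ∑' t : ℕ, γ * (P s s' * (γ ^ t * ((P ^ t).mulVec rp) s')) := by
          refine Summable.tsum_finsetSum ?_
          intro s' _
          exact ((hsum s').mul_left _).mul_left _
      _ = γ * ∑ s', P s s' * ∑' t : ℕ, γ ^ t * ((P ^ t).mulVec rp) s' := by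
          rw [Finset.mul_sum]
          apply Finset.sum_congr rfl
          intro s' _
          rw [tsum_mul_left, tsum_mul_left]



/-- Under Assumption 1, there is a uniform `c > 0` such that for every kernel `q`
the value function spread `max_{s,s'} (V^π_q(s) − V^π_q(s'))` is at least `c`;
in particular `V^π_q` is never constant. -/
theorem stmt8 {S A : Type*} [Fintype S] [DecidableEq S] [Fintype A] [DecidableEq A]
    [Nonempty S] [Nonempty A]
    (γ : ℝ) (hγ : γ ∈ Set.Ioo (0 : ℝ) 1) (r : S → A → ℝ)
    (π : S → A → ℝ) (hπ : IsPolicy π)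
    (ρ : S → ℝ) (hρ0 : ∀ s, 0 ≤ ρ s) (hρ1 : ∑ s : S, ρ s = 1)
    -- Assumption 1
    (hρpos : ∀ s, 0 < ρ s)
    (hA1a : ∑ s : S, ρ s * rpi π r s < (-γ / (1 - γ)) * (⨅ s : S, rpi π r s))
    (hA1b : (-γ / (1 - γ)) * (⨆ s : S, rpi π r s) < ∑ s : S, ρ s * rpi π r s) :
    ∃ c > 0, ∀ q : S → A → S → ℝ, IsKernel q →
      ∃ s s' : S, c ≤ Vval γ π r q s - Vval γ π r q s' := by
  have h1γ : (0:ℝ) < 1 - γ := by linarith [hγ.2]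
  obtain ⟨s1, hs1⟩ := Finite.exists_max (rpi π r)
  obtain ⟨s0, hs0⟩ := Finite.exists_min (rpi π r)
  have hsup : (⨆ s : S, rpi π r s) ≤ rpi π r s1 := ciSup_le hs1
  have hinf : rpi π r s0 ≤ (⨅ s : S, rpi π r s) := le_ciInf hs0
  have hk : 0 < γ / (1 - γ) := div_pos hγ.1 h1γ
  have hlt : (⨅ s : S, rpi π r s) < (⨆ s : S, rpi π r s) := by
    have h := hA1b.trans hA1a
    rw [neg_div] at h
    nlinarith [h, hk]
  have hc : 0 < (rpi π r s1 - rpi π r s0) / 2 := by linarith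
  refine ⟨(rpi π r s1 - rpi π r s0) / 2, hc, fun q hq => ?_⟩
  set P := Pmat π q with hP
  have h0 : ∀ s s', 0 ≤ P s s' := fun s s' =>
    Finset.sum_nonneg fun a _ => mul_nonneg (hπ.1 s a) (hq.1 s a s')
  have h1 : ∀ s, ∑ s', P s s' = 1 := by
    intro s
    rw [hP]
    unfold Pmat
    rw [Finset.sum_comm]
    calc ∑ a, ∑ s', π s a * q s a s' = ∑ a, π s a * ∑ s', q s a s' := by
          simp [Finset.mul_sum]
      _ = 1 := by simp [hq.2, hπ.2 s]
  have hbell := (bellman_aux γ hγ P h0 h1 (rpi π r)).2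
  have hV : ∀ s, Vval γ π r q s =
      rpi π r s + γ * ∑ s', P s s' * Vval γ π r q s' := fun s => hbell s
  obtain ⟨sM, hsM⟩ := Finite.exists_max (Vval γ π r q)
  obtain ⟨sm, hsm⟩ := Finite.exists_min (Vval γ π r q)
  have hub : ∀ s, ∑ s', P s s' * Vval γ π r q s' ≤ Vval γ π r q sM := by
    intro s
    calc ∑ s', P s s' * Vval γ π r q s' ≤ ∑ s', P s s' * Vval γ π r q sM :=
          Finset.sum_le_sum fun s' _ => mul_le_mul_of_nonneg_left (hsM s') (h0 s s')
      _ = Vval γ π r q sM := by rw [← Finset.sum_mul, h1 s, one_mul]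
  have hlb : ∀ s, Vval γ π r q sm ≤ ∑ s', P s s' * Vval γ π r q s' := by
    intro s
    calc Vval γ π r q sm = ∑ s', P s s' * Vval γ π r q sm := by
          rw [← Finset.sum_mul, h1 s, one_mul]
      _ ≤ ∑ s', P s s' * Vval γ π r q s' :=
          Finset.sum_le_sum fun s' _ => mul_le_mul_of_nonneg_left (hsm s') (h0 s s')
  refine ⟨sM, sm, ?_⟩
  have hB1 := hV s1
  have hB0 := hV s0
  have ha : γ * Vval γ π r q sm ≤ γ * ∑ s', P s1 s' * Vval γ π r q s' :=
    mul_le_mul_of_nonneg_left (hlb s1) hγ.1.le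
  have hb : γ * ∑ s', P s0 s' * Vval γ π r q s' ≤ γ * Vval γ π r q sM :=
    mul_le_mul_of_nonneg_left (hub s0) hγ.1.le
  have hspread : 0 ≤ Vval γ π r q sM - Vval γ π r q sm := by linarith [hsM sm]
  have hgs : γ * (Vval γ π r q sM - Vval γ π r q sm) ≤
      Vval γ π r q sM - Vval γ π r q sm :=
    mul_le_of_le_one_left hspread hγ.2.le
  have hVs1 : Vval γ π r q s1 ≤ Vval γ π r q sM := hsM s1
  have hVs0 : Vval γ π r q sm ≤ Vval γ π r q s0 := hsm s0
  linarith
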